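/- (Mirsky's inequality) Let A and B be real matrices of the same shape with singular values σ_j(A), σ_j(B) listed in decreasing order. Then √(Σ_j (σ_j(A) - σ_j(B))²) ≤ ‖A - B‖_F, where ‖·‖_F is the Frobenius norm. -/

import Mathlib

open Finset Matrix


lemma filter_range_le (N K : ℕ) :
    ((Finset.range N).filter (fun i => i ≤ K)) = Finset.range (min N (K+1)) := by
  ext i; simp [Finset.mem_filter, Finset.mem_range]

lemma expand_mul (N : ℕ) (F G : ℕ → ℝ) (c : ℝ) :
    (∑ k ∈ range N, F k) * (∑ l ∈ range N, G l) * c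
      = ∑ k ∈ range N, ∑ l ∈ range N, F k * G l * c := by
  rw [Finset.sum_mul_sum, Finset.sum_mul]
  exact Finset.sum_congr rfl fun k _ => by rw [Finset.sum_mul]


lemma swap4 {α β γ η : Type*} (A : Finset α) (B : Finset β) (C : Finset γ) (D : Finset η)
    (F : α → β → γ → η → ℝ) :
    ∑ a ∈ A, ∑ b ∈ B, ∑ c ∈ C, ∑ d ∈ D, F a b c d
      = ∑ c ∈ C, ∑ d ∈ D, ∑ a ∈ A, ∑ b ∈ B, F a b c d :=
  calc ∑ a ∈ A, ∑ b ∈ B, ∑ c ∈ C, ∑ d ∈ D, F a b c d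
      = ∑ a ∈ A, ∑ c ∈ C, ∑ b ∈ B, ∑ d ∈ D, F a b c d :=
        Finset.sum_congr rfl fun a _ => Finset.sum_comm
    _ = ∑ c ∈ C, ∑ a ∈ A, ∑ b ∈ B, ∑ d ∈ D, F a b c d := Finset.sum_comm
    _ = ∑ c ∈ C, ∑ a ∈ A, ∑ d ∈ D, ∑ b ∈ B, F a b c d :=
        Finset.sum_congr rfl fun c _ => Finset.sum_congr rfl fun a _ => Finset.sum_comm
    _ = ∑ c ∈ C, ∑ d ∈ D, ∑ a ∈ A, ∑ b ∈ B, F a b c d :=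
        Finset.sum_congr rfl fun c _ => Finset.sum_comm

lemma swap3 {α γ η : Type*} (A : Finset α) (C : Finset γ) (D : Finset η)
    (F : α → γ → η → ℝ) :
    ∑ a ∈ A, ∑ c ∈ C, ∑ d ∈ D, F a c d = ∑ c ∈ C, ∑ d ∈ D, ∑ a ∈ A, F a c d :=
  calc ∑ a ∈ A, ∑ c ∈ C, ∑ d ∈ D, F a c d
      = ∑ c ∈ C, ∑ a ∈ A, ∑ d ∈ D, F a c d := Finset.sum_comm
    _ = ∑ c ∈ C, ∑ d ∈ D, ∑ a ∈ A, F a c d :=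
        Finset.sum_congr rfl fun c _ => Finset.sum_comm

lemma subDS {N : ℕ} (a b : Fin N → ℝ) (ha : Antitone a) (hb : Antitone b)
    (ha0 : ∀ i, 0 ≤ a i) (hb0 : ∀ i, 0 ≤ b i)
    (q : Fin N → Fin N → ℝ) (hq0 : ∀ i j, 0 ≤ q i j)
    (hrow : ∀ i, ∑ j, q i j ≤ 1) (hcol : ∀ j, ∑ i, q i j ≤ 1) :
    ∑ i, ∑ j, a i * b j * q i j ≤ ∑ i, a i * b i := by
  classical
  -- extended sequences
  set a' : ℕ → ℝ := fun i => if h : i < N then a ⟨i, h⟩ else 0 with ha'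
  set b' : ℕ → ℝ := fun i => if h : i < N then b ⟨i, h⟩ else 0 with hb'
  set δ : ℕ → ℝ := fun k => a' k - a' (k+1) with hδdef
  set ε : ℕ → ℝ := fun k => b' k - b' (k+1) with hεdef
  have hδ0 : ∀ k, 0 ≤ δ k := by
    intro k
    simp only [hδdef, ha', sub_nonneg]
    split_ifs with h1 h2 h2
    · exact ha (Fin.mk_le_mk.mpr (by omega))
    · omega
    · exact ha0 _
    · exact le_refl 0
  have hε0 : ∀ k, 0 ≤ ε k := by
    intro k
    simp only [hεdef, hb', sub_nonneg]
    split_ifs with h1 h2 h2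
    · exact hb (Fin.mk_le_mk.mpr (by omega))
    · omega
    · exact hb0 _
    · exact le_refl 0
  have key : ∀ (c : Fin N → ℝ) (c' d : ℕ → ℝ), (c' = fun i => if h : i < N then c ⟨i, h⟩ else 0) →
      (d = fun k => c' k - c' (k+1)) →
      ∀ i : Fin N, c i = ∑ k ∈ range N, (if (i:ℕ) ≤ k then d k else 0) := by
    intro c c' d hc' hd i
    have hfil : (range N).filter (fun k => (i:ℕ) ≤ k) = Finset.Ico (i:ℕ) N := by
      ext k; simp [Finset.mem_filter, Finset.mem_range, Finset.mem_Ico]; omega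
    rw [Finset.sum_ite, Finset.sum_const_zero, add_zero, hfil,
      Finset.sum_Ico_eq_sum_range]
    have : ∀ k, d ((i:ℕ) + k) = (fun k => c' ((i:ℕ) + k)) k - (fun k => c' ((i:ℕ) + k)) (k+1) := by
      intro k; simp [hd, Nat.add_assoc]
    rw [Finset.sum_congr rfl (fun k _ => this k), Finset.sum_range_sub']
    have h0 : c' ((i:ℕ) + 0) = c i := by simp [hc']
    have hN : c' ((i:ℕ) + (N - (i:ℕ))) = 0 := by
      have : (i:ℕ) + (N - (i:ℕ)) = N := by omega
      simp [hc', this]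
    rw [h0, hN, sub_zero]
  have hatel := key a a' δ ha' hδdef
  have hbtel := key b b' ε hb' hεdef
  set S : ℕ → ℕ → ℝ := fun k l => ∑ i : Fin N, ∑ j : Fin N,
      (if (i:ℕ) ≤ k ∧ (j:ℕ) ≤ l then q i j else 0) with hSdef
  set C : ℕ → ℕ → ℝ := fun k l => ∑ i : Fin N,
      (if (i:ℕ) ≤ k ∧ (i:ℕ) ≤ l then (1:ℝ) else 0) with hCdef
  have lhs_eq : ∑ i, ∑ j, a i * b j * q i j
      = ∑ k ∈ range N, ∑ l ∈ range N, δ k * ε l * S k l := by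
    have step1 : ∑ i, ∑ j, a i * b j * q i j
        = ∑ k ∈ range N, ∑ l ∈ range N, ∑ i : Fin N, ∑ j : Fin N,
            (if (i:ℕ) ≤ k then δ k else 0) * (if (j:ℕ) ≤ l then ε l else 0) * q i j := by
      rw [← swap4]
      exact Finset.sum_congr rfl fun i _ => Finset.sum_congr rfl fun j _ => by
        rw [hatel i, hbtel j, expand_mul]
    rw [step1]
    refine Finset.sum_congr rfl fun k _ => Finset.sum_congr rfl fun l _ => ?_
    have : ∀ (i j : Fin N), (if (i:ℕ) ≤ k then δ k else 0) * (if (j:ℕ) ≤ l then ε l else 0) * q i j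
        = δ k * ε l * (if (i:ℕ) ≤ k ∧ (j:ℕ) ≤ l then q i j else 0) := by
      intro i j
      by_cases h1 : (i:ℕ) ≤ k <;> by_cases h2 : (j:ℕ) ≤ l <;> simp [h1, h2] <;> ring
    rw [Finset.sum_congr rfl fun i _ => Finset.sum_congr rfl fun j _ => this i j, hSdef]
    simp only [Finset.mul_sum]
  have rhs_eq : ∑ i, a i * b i = ∑ k ∈ range N, ∑ l ∈ range N, δ k * ε l * C k l := by
    have step1 : ∑ i, a i * b i
        = ∑ k ∈ range N, ∑ l ∈ range N, ∑ i : Fin N,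
            (if (i:ℕ) ≤ k then δ k else 0) * (if (i:ℕ) ≤ l then ε l else 0) := by
      rw [← swap3]
      exact Finset.sum_congr rfl fun i _ => by
        rw [hatel i, hbtel i, Finset.sum_mul_sum]
    rw [step1]
    refine Finset.sum_congr rfl fun k _ => Finset.sum_congr rfl fun l _ => ?_
    have : ∀ (i : Fin N), (if (i:ℕ) ≤ k then δ k else 0) * (if (i:ℕ) ≤ l then ε l else 0)
        = δ k * ε l * (if (i:ℕ) ≤ k ∧ (i:ℕ) ≤ l then (1:ℝ) else 0) := by
      intro i
      by_cases h1 : (i:ℕ) ≤ k <;> by_cases h2 : (i:ℕ) ≤ l <;> simp [h1, h2] <;> ring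
    rw [Finset.sum_congr rfl fun i _ => this i, hCdef]
    simp only [Finset.mul_sum]
  rw [lhs_eq, rhs_eq]
  refine Finset.sum_le_sum fun k hk => Finset.sum_le_sum fun l hl => ?_
  refine mul_le_mul_of_nonneg_left ?_ (mul_nonneg (hδ0 k) (hε0 l))
  -- S k l ≤ C k l
  have hCval : C k l = ((min k l + 1 : ℕ) : ℝ) := by
    rw [hCdef]
    simp only []
    have : ∀ i : Fin N, (if (i:ℕ) ≤ k ∧ (i:ℕ) ≤ l then (1:ℝ) else 0)
        = (if (i:ℕ) ≤ min k l then (1:ℝ) else 0) := by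
      intro i; congr 1; simp [le_min_iff]
    rw [Finset.sum_congr rfl fun i _ => this i, Fin.sum_univ_eq_sum_range
      (fun i => if i ≤ min k l then (1:ℝ) else 0), Finset.sum_ite, Finset.sum_const_zero,
      add_zero, Finset.sum_const, filter_range_le, Finset.card_range]
    have hmin : min N (min k l + 1) = min k l + 1 := by
      simp only [Finset.mem_range] at hk hl; omega
    rw [hmin]; simp
  have hrowS : S k l ≤ ((k + 1 : ℕ) : ℝ) := by
    rw [hSdef]
    have hb1 : ∀ i : Fin N, (∑ j : Fin N, if (i:ℕ) ≤ k ∧ (j:ℕ) ≤ l then q i j else 0)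
        ≤ (if (i:ℕ) ≤ k then (1:ℝ) else 0) := by
      intro i
      by_cases hik : (i:ℕ) ≤ k
      · simp only [hik, if_true, true_and]
        calc (∑ j : Fin N, if (j:ℕ) ≤ l then q i j else 0) ≤ ∑ j : Fin N, q i j :=
              Finset.sum_le_sum fun j _ => by split_ifs; exact le_refl _; exact hq0 i j
          _ ≤ 1 := hrow i
      · simp only [hik, if_false, false_and]
        simp
    calc (∑ i : Fin N, ∑ j : Fin N, if (i:ℕ) ≤ k ∧ (j:ℕ) ≤ l then q i j else 0)
        ≤ ∑ i : Fin N, (if (i:ℕ) ≤ k then (1:ℝ) else 0) := Finset.sum_le_sum fun i _ => hb1 i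
      _ ≤ ((k+1:ℕ):ℝ) := by
          rw [Fin.sum_univ_eq_sum_range (fun i => if i ≤ k then (1:ℝ) else 0),
            Finset.sum_ite, Finset.sum_const_zero, add_zero, Finset.sum_const,
            filter_range_le, Finset.card_range]
          simp only [nsmul_eq_mul, mul_one]
          exact_mod_cast Nat.cast_le.mpr (Nat.min_le_right _ _)
  have hcolS : S k l ≤ ((l + 1 : ℕ) : ℝ) := by
    simp only [hSdef]
    rw [Finset.sum_comm]
    have hb1 : ∀ j : Fin N, (∑ i : Fin N, if (i:ℕ) ≤ k ∧ (j:ℕ) ≤ l then q i j else 0)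
        ≤ (if (j:ℕ) ≤ l then (1:ℝ) else 0) := by
      intro j
      by_cases hjl : (j:ℕ) ≤ l
      · simp only [hjl, if_true, and_true]
        calc (∑ i : Fin N, if (i:ℕ) ≤ k then q i j else 0) ≤ ∑ i : Fin N, q i j :=
              Finset.sum_le_sum fun i _ => by split_ifs; exact le_refl _; exact hq0 i j
          _ ≤ 1 := hcol j
      · simp only [hjl, if_false, and_false]
        simp
    calc (∑ j : Fin N, ∑ i : Fin N, if (i:ℕ) ≤ k ∧ (j:ℕ) ≤ l then q i j else 0)
        ≤ ∑ j : Fin N, (if (j:ℕ) ≤ l then (1:ℝ) else 0) := Finset.sum_le_sum fun j _ => hb1 j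
      _ ≤ ((l+1:ℕ):ℝ) := by
          rw [Fin.sum_univ_eq_sum_range (fun j => if j ≤ l then (1:ℝ) else 0),
            Finset.sum_ite, Finset.sum_const_zero, add_zero, Finset.sum_const,
            filter_range_le, Finset.card_range]
          simp only [nsmul_eq_mul, mul_one]
          exact_mod_cast Nat.cast_le.mpr (Nat.min_le_right _ _)
  rw [hCval]
  rcases le_total k l with h | h
  · calc S k l ≤ ((k+1:ℕ):ℝ) := hrowS
      _ = ((min k l + 1:ℕ):ℝ) := by rw [min_eq_left h]
  · calc S k l ≤ ((l+1:ℕ):ℝ) := hcolS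
      _ = ((min k l + 1:ℕ):ℝ) := by rw [min_eq_right h]


lemma dotProduct_finsum {M : ℕ} {ι : Type*} (s : Finset ι) (x : Fin M → ℝ) (f : ι → Fin M → ℝ) :
    x ⬝ᵥ (∑ i ∈ s, f i) = ∑ i ∈ s, x ⬝ᵥ f i := by
  simp only [dotProduct, Finset.sum_apply, Finset.mul_sum]
  exact Finset.sum_comm

lemma finsum_dotProduct {M : ℕ} {ι : Type*} (s : Finset ι) (x : Fin M → ℝ) (f : ι → Fin M → ℝ) :
    (∑ i ∈ s, f i) ⬝ᵥ x = ∑ i ∈ s, f i ⬝ᵥ x := by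
  simp only [dotProduct, Finset.sum_apply, Finset.sum_mul]
  exact Finset.sum_comm

lemma bessel {N M : ℕ} (p : Fin N → (Fin M → ℝ))
    (horth : ∀ i j, i ≠ j → p i ⬝ᵥ p j = 0) (hnorm : ∀ i, p i ⬝ᵥ p i ≤ 1)
    (x : Fin M → ℝ) : ∑ i, (x ⬝ᵥ p i) ^ 2 ≤ x ⬝ᵥ x := by
  classical
  set c : Fin N → ℝ := fun i => x ⬝ᵥ p i with hc
  set y : Fin M → ℝ := ∑ i, c i • p i with hy
  have hxy : x ⬝ᵥ y = ∑ i, c i ^ 2 := by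
    rw [hy, dotProduct_finsum]
    exact Finset.sum_congr rfl fun i _ => by
      simp only [dotProduct_smul, smul_eq_mul, hc]; ring
  have hyy : y ⬝ᵥ y ≤ ∑ i, c i ^ 2 := by
    rw [hy, finsum_dotProduct]
    have : ∀ i : Fin N, (c i • p i) ⬝ᵥ (∑ j, c j • p j) = c i ^ 2 * (p i ⬝ᵥ p i) := by
      intro i
      rw [dotProduct_finsum]
      rw [Finset.sum_eq_single i]
      · rw [smul_dotProduct, dotProduct_smul, smul_eq_mul, smul_eq_mul]; ring
      · intro j _ hji
        rw [smul_dotProduct, dotProduct_smul, horth i j (Ne.symm hji)]; simp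
      · simp
    rw [Finset.sum_congr rfl fun i _ => this i]
    calc ∑ i, c i ^ 2 * (p i ⬝ᵥ p i) ≤ ∑ i, c i ^ 2 * 1 :=
          Finset.sum_le_sum fun i _ => mul_le_mul_of_nonneg_left (hnorm i) (sq_nonneg _)
      _ = ∑ i, c i ^ 2 := by simp
  have hpos : 0 ≤ (x - y) ⬝ᵥ (x - y) := by
    apply Finset.sum_nonneg; intro i _; exact mul_self_nonneg _
  have hexp : (x - y) ⬝ᵥ (x - y) = x ⬝ᵥ x - 2 * (x ⬝ᵥ y) + y ⬝ᵥ y := by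
    rw [sub_dotProduct, dotProduct_sub, dotProduct_sub]
    have : y ⬝ᵥ x = x ⬝ᵥ y := dotProduct_comm _ _
    rw [this]; ring
  have := hpos
  rw [hexp, hxy] at this
  have hcsq : ∑ i, (x ⬝ᵥ p i) ^ 2 = ∑ i, c i ^ 2 := rfl
  rw [hcsq]
  nlinarith [hyy]



lemma dot_mulVec_mulVec {m n : ℕ} (A : Matrix (Fin m) (Fin n) ℝ) (x y : Fin n → ℝ) :
    (A *ᵥ x) ⬝ᵥ (A *ᵥ y) = x ⬝ᵥ ((Aᴴ * A) *ᵥ y) := by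
  symm
  calc x ⬝ᵥ ((Aᴴ * A) *ᵥ y)
      = ∑ k, ∑ k', ∑ i, (A i k * x k) * (A i k' * y k') := by
        simp only [dotProduct, mulVec, Matrix.mul_apply, conjTranspose_apply, star_trivial,
          Finset.sum_mul, Finset.mul_sum]
        refine Finset.sum_congr rfl fun k _ => Finset.sum_congr rfl fun k' _ =>
          Finset.sum_congr rfl fun i _ => by ring
    _ = ∑ k, ∑ i, ∑ k', (A i k * x k) * (A i k' * y k') :=
        Finset.sum_congr rfl fun k _ => Finset.sum_comm
    _ = ∑ i, ∑ k, ∑ k', (A i k * x k) * (A i k' * y k') := Finset.sum_comm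
    _ = (A *ᵥ x) ⬝ᵥ (A *ᵥ y) := by
        simp only [dotProduct, mulVec]
        exact Finset.sum_congr rfl fun i _ => (Finset.sum_mul_sum _ _ _ _).symm

lemma sqrt_aux (t : ℝ) (ht : 0 ≤ t) :
    (Real.sqrt t)⁻¹ * (Real.sqrt t)⁻¹ * t = if t = 0 then 0 else 1 := by
  split_ifs with h
  · simp [h]
  · have hs : Real.sqrt t ≠ 0 := Real.sqrt_ne_zero'.mpr (lt_of_le_of_ne ht (Ne.symm h))
    rw [← Real.sqrt_mul_self ht]
    field_simp
    rw [Real.sq_sqrt (Real.sqrt_nonneg _)]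

lemma svd_data {m n : ℕ} (A : Matrix (Fin m) (Fin n) ℝ) :
    ∃ (v : Fin n → Fin n → ℝ) (u : Fin n → Fin m → ℝ),
      (∀ i j, v i ⬝ᵥ v j = if i = j then 1 else 0) ∧
      (∀ k k', ∑ j, v j k * v j k' = if k = k' then 1 else 0) ∧
      (∀ i j, i ≠ j → u i ⬝ᵥ u j = 0) ∧
      (∀ j, u j ⬝ᵥ u j ≤ 1) ∧
      (∀ j, (Real.sqrt ((Matrix.isHermitian_conjTranspose_mul_self A).eigenvalues j)) ^ 2 *
          (u j ⬝ᵥ u j)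
        = (Real.sqrt ((Matrix.isHermitian_conjTranspose_mul_self A).eigenvalues j)) ^ 2) ∧
      (∀ i k, A i k = ∑ j, Real.sqrt ((Matrix.isHermitian_conjTranspose_mul_self A).eigenvalues j)
          * u j i * v j k) := by
  classical
  set hA := Matrix.isHermitian_conjTranspose_mul_self A with hhA
  set lam : Fin n → ℝ := hA.eigenvalues with hlam
  set s : Fin n → ℝ := fun j => Real.sqrt (lam j) with hs
  have hlam0 : ∀ j, 0 ≤ lam j := fun j => Matrix.eigenvalues_conjTranspose_mul_self_nonneg A j
  have hssq : ∀ j, s j ^ 2 = lam j := fun j => Real.sq_sqrt (hlam0 j)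
  set v : Fin n → Fin n → ℝ := fun j => (WithLp.equiv 2 _) (hA.eigenvectorBasis j) with hv
  set u : Fin n → Fin m → ℝ := fun j => (s j)⁻¹ • (A *ᵥ v j) with hu
  have heig : ∀ j, (Aᴴ * A) *ᵥ v j = lam j • v j := fun j => hA.mulVec_eigenvectorBasis j
  have hv1 : ∀ i j, v i ⬝ᵥ v j = if i = j then 1 else 0 := by
    intro i j
    have := (orthonormal_iff_ite (𝕜 := ℝ)).mp hA.eigenvectorBasis.orthonormal i j
    rw [PiLp.inner_apply] at this
    simpa [dotProduct, RCLike.inner_apply, v, mul_comm] using this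
  have hv2 : ∀ k k', ∑ j, v j k * v j k' = if k = k' then 1 else 0 := by
    intro k k'
    have hmem := (hA.eigenvectorUnitary).2
    have h1 : (hA.eigenvectorUnitary : Matrix (Fin n) (Fin n) ℝ) *
        star (hA.eigenvectorUnitary : Matrix (Fin n) (Fin n) ℝ) = 1 :=
      Matrix.mem_unitaryGroup_iff.mp hmem
    have := congrFun (congrFun h1 k) k'
    simp only [Matrix.mul_apply, Matrix.star_apply, star_trivial, Matrix.one_apply] at this
    rw [← this]
    refine Finset.sum_congr rfl fun j _ => ?_
    have e1 : (hA.eigenvectorUnitary : Matrix (Fin n) (Fin n) ℝ) k j = v j k := rfl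
    have e2 : (hA.eigenvectorUnitary : Matrix (Fin n) (Fin n) ℝ) k' j = v j k' := rfl
    rw [e1, e2]
  have hAv : ∀ i j, (A *ᵥ v i) ⬝ᵥ (A *ᵥ v j) = if i = j then lam j else 0 := by
    intro i j
    rw [dot_mulVec_mulVec, heig j, dotProduct_smul, smul_eq_mul, hv1 i j]
    split_ifs <;> ring
  have hAv0 : ∀ j, s j = 0 → A *ᵥ v j = 0 := by
    intro j hj
    have h0 : lam j = 0 := by rw [← hssq j, hj]; ring
    have := hAv j j
    rw [h0, if_pos rfl] at this
    exact dotProduct_self_eq_zero.mp this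
  have hsu : ∀ j, s j • u j = A *ᵥ v j := by
    intro j
    by_cases hj : s j = 0
    · rw [hj, hAv0 j hj, zero_smul]
    · rw [hu]; simp only [smul_smul]
      rw [mul_inv_cancel₀ hj, one_smul]
  have huu : ∀ i j, u i ⬝ᵥ u j = (s i)⁻¹ * (s j)⁻¹ * (if i = j then lam j else 0) := by
    intro i j
    rw [hu]; simp only [smul_dotProduct, dotProduct_smul, smul_eq_mul]
    rw [hAv i j]; ring
  refine ⟨v, u, hv1, hv2, ?_, ?_, ?_, ?_⟩
  · intro i j hij
    rw [huu i j, if_neg hij]; ring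
  · intro j
    rw [huu j j, if_pos rfl]
    simp only [hs]
    rw [sqrt_aux _ (hlam0 j)]
    split_ifs <;> norm_num
  · intro j
    rw [huu j j, if_pos rfl]
    simp only [hs]
    rw [sqrt_aux _ (hlam0 j)]
    split_ifs with h <;> simp [h]
  · intro i k
    have step : ∀ j : Fin n, s j * u j i * v j k = (A *ᵥ v j) i * v j k := by
      intro j
      have := congrFun (hsu j) i
      simp only [Pi.smul_apply, smul_eq_mul] at this
      rw [← this]
    rw [Finset.sum_congr rfl fun j _ => step j]
    have : A i k = ∑ k' : Fin n, A i k' * (if k' = k then 1 else 0) := by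
      simp [Finset.sum_ite_eq']
    rw [this]
    calc ∑ k' : Fin n, A i k' * (if k' = k then 1 else 0)
        = ∑ k' : Fin n, A i k' * ∑ j, v j k' * v j k := by
          refine Finset.sum_congr rfl fun k' _ => ?_; rw [hv2 k' k]
      _ = ∑ k' : Fin n, ∑ j, A i k' * (v j k' * v j k) := by
          refine Finset.sum_congr rfl fun k' _ => ?_; rw [Finset.mul_sum]
      _ = ∑ j, ∑ k' : Fin n, A i k' * (v j k' * v j k) := Finset.sum_comm
      _ = ∑ j, (A *ᵥ v j) i * v j k := by
          refine Finset.sum_congr rfl fun j _ => ?_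
          simp only [mulVec, dotProduct, Finset.sum_mul]
          exact Finset.sum_congr rfl fun k' _ => by ring




lemma expand_inner {m n : ℕ} (A B : Matrix (Fin m) (Fin n) ℝ)
    (sA sB : Fin n → ℝ) (uA uB : Fin n → Fin m → ℝ) (vA vB : Fin n → Fin n → ℝ)
    (hA : ∀ i k, A i k = ∑ j, sA j * uA j i * vA j k)
    (hB : ∀ i k, B i k = ∑ j, sB j * uB j i * vB j k) :
    ∑ i, ∑ k, A i k * B i k
      = ∑ j, ∑ j', (sA j * sB j') * ((uA j ⬝ᵥ uB j') * (vA j ⬝ᵥ vB j')) := by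
  calc ∑ i, ∑ k, A i k * B i k
      = ∑ i, ∑ k, ∑ j, ∑ j', (sA j * uA j i * vA j k) * (sB j' * uB j' i * vB j' k) := by
        refine Finset.sum_congr rfl fun i _ => Finset.sum_congr rfl fun k _ => ?_
        rw [hA i k, hB i k, Finset.sum_mul_sum]
    _ = ∑ j, ∑ j', ∑ i, ∑ k, (sA j * uA j i * vA j k) * (sB j' * uB j' i * vB j' k) :=
        swap4 univ univ univ univ _
    _ = ∑ j, ∑ j', (sA j * sB j') * ((uA j ⬝ᵥ uB j') * (vA j ⬝ᵥ vB j')) := by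
        refine Finset.sum_congr rfl fun j _ => Finset.sum_congr rfl fun j' _ => ?_
        calc ∑ i, ∑ k, (sA j * uA j i * vA j k) * (sB j' * uB j' i * vB j' k)
            = ∑ i, ∑ k, (sA j * sB j') * ((uA j i * uB j' i) * (vA j k * vB j' k)) := by
              exact Finset.sum_congr rfl fun i _ => Finset.sum_congr rfl fun k _ => by ring
          _ = (sA j * sB j') * ∑ i, ∑ k, (uA j i * uB j' i) * (vA j k * vB j' k) := by
              simp only [Finset.mul_sum]
          _ = (sA j * sB j') * ((uA j ⬝ᵥ uB j') * (vA j ⬝ᵥ vB j')) := by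
              congr 1
              rw [dotProduct, dotProduct, Finset.sum_mul_sum]

lemma mirsky_core {m n : ℕ} (A B : Matrix (Fin m) (Fin n) ℝ)
    (sA sB dA dB : Fin n → ℝ)
    (uA uB : Fin n → Fin m → ℝ) (vA vB : Fin n → Fin n → ℝ)
    (hsA0 : ∀ j, 0 ≤ sA j) (hsB0 : ∀ j, 0 ≤ sB j)
    (hdA : ∀ j, dA j = (sA ∘ Tuple.sort sA) j.rev)
    (hdB : ∀ j, dB j = (sB ∘ Tuple.sort sB) j.rev)
    (hvA1 : ∀ i j, vA i ⬝ᵥ vA j = if i = j then 1 else 0)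
    (hvB1 : ∀ i j, vB i ⬝ᵥ vB j = if i = j then 1 else 0)
    (huA1 : ∀ i j, i ≠ j → uA i ⬝ᵥ uA j = 0)
    (huB1 : ∀ i j, i ≠ j → uB i ⬝ᵥ uB j = 0)
    (huA2 : ∀ j, uA j ⬝ᵥ uA j ≤ 1) (huB2 : ∀ j, uB j ⬝ᵥ uB j ≤ 1)
    (huA3 : ∀ j, sA j ^ 2 * (uA j ⬝ᵥ uA j) = sA j ^ 2)
    (huB3 : ∀ j, sB j ^ 2 * (uB j ⬝ᵥ uB j) = sB j ^ 2)
    (hrepA : ∀ i k, A i k = ∑ j, sA j * uA j i * vA j k)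
    (hrepB : ∀ i k, B i k = ∑ j, sB j * uB j i * vB j k) :
    ∑ j, (dA j - dB j) ^ 2 ≤ ∑ i, ∑ k, (A i k - B i k) ^ 2 := by
  classical
  -- permutations realizing the sorted sequences
  set permA : Equiv.Perm (Fin n) := (Fin.revPerm).trans (Tuple.sort sA) with hpermA
  set permB : Equiv.Perm (Fin n) := (Fin.revPerm).trans (Tuple.sort sB) with hpermB
  have hpA : ∀ j, dA j = sA (permA j) := by
    intro j; rw [hdA j]; rfl
  have hpB : ∀ j, dB j = sB (permB j) := by
    intro j; rw [hdB j]; rfl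
  have hantiA : Antitone dA := by
    intro a b hab
    rw [hdA a, hdA b]
    exact Tuple.monotone_sort sA (Fin.rev_le_rev.mpr hab)
  have hantiB : Antitone dB := by
    intro a b hab
    rw [hdB a, hdB b]
    exact Tuple.monotone_sort sB (Fin.rev_le_rev.mpr hab)
  have hdA0 : ∀ j, 0 ≤ dA j := fun j => by rw [hdA j]; exact hsA0 _
  have hdB0 : ∀ j, 0 ≤ dB j := fun j => by rw [hdB j]; exact hsB0 _
  -- diagonal sums
  have hAA : ∑ i, ∑ k, A i k * A i k = ∑ j, sA j ^ 2 := by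
    rw [expand_inner A A sA sA uA uA vA vA hrepA hrepA]
    refine Finset.sum_congr rfl fun j _ => ?_
    rw [Finset.sum_eq_single j]
    · rw [hvA1 j j, if_pos rfl, mul_one, show sA j * sA j = sA j ^ 2 by ring, huA3 j]
    · intro j' _ hj'
      rw [hvA1 j j', if_neg (Ne.symm hj')]; ring
    · simp
  have hBB : ∑ i, ∑ k, B i k * B i k = ∑ j, sB j ^ 2 := by
    rw [expand_inner B B sB sB uB uB vB vB hrepB hrepB]
    refine Finset.sum_congr rfl fun j _ => ?_
    rw [Finset.sum_eq_single j]
    · rw [hvB1 j j, if_pos rfl, mul_one, show sB j * sB j = sB j ^ 2 by ring, huB3 j]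
    · intro j' _ hj'
      rw [hvB1 j j', if_neg (Ne.symm hj')]; ring
    · simp
  -- the doubly substochastic matrix
  set Q : Fin n → Fin n → ℝ := fun j j' => |uA j ⬝ᵥ uB j'| * |vA j ⬝ᵥ vB j'| with hQ
  have hQ0 : ∀ j j', 0 ≤ Q j j' := fun j j' => mul_nonneg (abs_nonneg _) (abs_nonneg _)
  have sq_sum_le : ∀ (f g : Fin n → ℝ), (∑ j', (f j')^2) ≤ 1 → (∑ j', (g j')^2) ≤ 1 →
      ∑ j', |f j'| * |g j'| ≤ 1 := by
    intro f g h1 h2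
    have h3 : (∑ j', |f j'| * |g j'|) ^ 2 ≤ (∑ j', |f j'| ^ 2) * ∑ j', |g j'| ^ 2 :=
      Finset.sum_mul_sq_le_sq_mul_sq univ _ _
    have e1 : ∑ j' : Fin n, |f j'| ^ 2 = ∑ j', (f j')^2 := by simp [sq_abs]
    have e2 : ∑ j' : Fin n, |g j'| ^ 2 = ∑ j', (g j')^2 := by simp [sq_abs]
    rw [e1, e2] at h3
    have h4 : 0 ≤ ∑ j', |f j'| * |g j'| :=
      Finset.sum_nonneg fun j' _ => mul_nonneg (abs_nonneg _) (abs_nonneg _)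
    have h5 : 0 ≤ ∑ j', (f j')^2 := Finset.sum_nonneg fun j' _ => sq_nonneg _
    nlinarith
  have hrowQ : ∀ j, ∑ j', Q j j' ≤ 1 := by
    intro j
    refine sq_sum_le _ _ ?_ ?_
    · exact le_trans (bessel uB huB1 huB2 (uA j)) (huA2 j)
    · refine le_trans (bessel vB (fun i j' h => by rw [hvB1 i j', if_neg h])
        (fun i => by rw [hvB1 i i, if_pos rfl]) (vA j)) ?_
      rw [hvA1 j j, if_pos rfl]
  have hcolQ : ∀ j', ∑ j, Q j j' ≤ 1 := by
    intro j'
    have e : ∀ j, Q j j' = |uB j' ⬝ᵥ uA j| * |vB j' ⬝ᵥ vA j| := by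
      intro j; rw [hQ]; simp only [dotProduct_comm]
    rw [Finset.sum_congr rfl fun j _ => e j]
    refine sq_sum_le _ _ ?_ ?_
    · exact le_trans (bessel uA huA1 huA2 (uB j')) (huB2 j')
    · refine le_trans (bessel vA (fun i j h => by rw [hvA1 i j, if_neg h])
        (fun i => by rw [hvA1 i i, if_pos rfl]) (vB j')) ?_
      rw [hvB1 j' j', if_pos rfl]
  -- the trace inequality
  have trace_ineq : ∑ i, ∑ k, A i k * B i k ≤ ∑ j, dA j * dB j := by
    calc ∑ i, ∑ k, A i k * B i k
        = ∑ j, ∑ j', (sA j * sB j') * ((uA j ⬝ᵥ uB j') * (vA j ⬝ᵥ vB j')) :=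
          expand_inner A B sA sB uA uB vA vB hrepA hrepB
      _ ≤ ∑ j, ∑ j', (sA j * sB j') * Q j j' := by
          refine Finset.sum_le_sum fun j _ => Finset.sum_le_sum fun j' _ => ?_
          refine mul_le_mul_of_nonneg_left ?_ (mul_nonneg (hsA0 j) (hsB0 j'))
          rw [hQ]
          calc (uA j ⬝ᵥ uB j') * (vA j ⬝ᵥ vB j') ≤ |(uA j ⬝ᵥ uB j') * (vA j ⬝ᵥ vB j')| :=
                le_abs_self _
            _ = |uA j ⬝ᵥ uB j'| * |vA j ⬝ᵥ vB j'| := abs_mul _ _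
      _ = ∑ j, ∑ j', (sA (permA j) * sB (permB j')) * Q (permA j) (permB j') := by
          rw [← Equiv.sum_comp permA (fun j => ∑ j', (sA j * sB j') * Q j j')]
          refine Finset.sum_congr rfl fun j _ => ?_
          rw [← Equiv.sum_comp permB (fun j' => (sA (permA j) * sB j') * Q (permA j) j')]
      _ = ∑ j, ∑ j', dA j * dB j' * Q (permA j) (permB j') := by
          refine Finset.sum_congr rfl fun j _ => Finset.sum_congr rfl fun j' _ => ?_
          rw [hpA j, hpB j']
      _ ≤ ∑ j, dA j * dB j := by
          refine subDS dA dB hantiA hantiB hdA0 hdB0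
            (fun j j' => Q (permA j) (permB j')) (fun j j' => hQ0 _ _) ?_ ?_
          · intro j
            rw [Equiv.sum_comp permB (fun j' => Q (permA j) j')]
            exact hrowQ _
          · intro j'
            rw [Equiv.sum_comp permA (fun j => Q j (permB j'))]
            exact hcolQ _
  -- sums of squares transfer
  have hdA2 : ∑ j, dA j ^ 2 = ∑ i, ∑ k, A i k * A i k := by
    rw [hAA, ← Equiv.sum_comp permA (fun j => sA j ^ 2)]
    exact Finset.sum_congr rfl fun j _ => by rw [hpA j]
  have hdB2 : ∑ j, dB j ^ 2 = ∑ i, ∑ k, B i k * B i k := by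
    rw [hBB, ← Equiv.sum_comp permB (fun j => sB j ^ 2)]
    exact Finset.sum_congr rfl fun j _ => by rw [hpB j]
  -- final expansion
  have expand1 : ∑ j, (dA j - dB j) ^ 2
      = ∑ j, dA j ^ 2 + ∑ j, dB j ^ 2 - 2 * ∑ j, dA j * dB j := by
    rw [← Finset.sum_add_distrib, Finset.mul_sum, ← Finset.sum_sub_distrib]
    exact Finset.sum_congr rfl fun j _ => by ring
  have expand2 : ∑ i, ∑ k, (A i k - B i k) ^ 2
      = ∑ i, ∑ k, A i k * A i k + ∑ i, ∑ k, B i k * B i k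
        - 2 * ∑ i, ∑ k, A i k * B i k := by
    rw [← Finset.sum_add_distrib, Finset.mul_sum, ← Finset.sum_sub_distrib]
    refine Finset.sum_congr rfl fun i _ => ?_
    rw [← Finset.sum_add_distrib, Finset.mul_sum, ← Finset.sum_sub_distrib]
    exact Finset.sum_congr rfl fun k _ => by ring
  rw [expand1, expand2, hdA2, hdB2]
  linarith [trace_ineq]


/-- The singular values of a real matrix `A` (square roots of the eigenvalues of
`AᴴA`), listed in decreasing order: index `0` is the largest. -/
noncomputable def svalDesc {m n : ℕ} (A : Matrix (Fin m) (Fin n) ℝ) : Fin n → ℝ :=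
  fun j =>
    let s : Fin n → ℝ :=
      fun i => Real.sqrt ((Matrix.isHermitian_conjTranspose_mul_self A).eigenvalues i)
    (s ∘ Tuple.sort s) j.rev

/-- The Frobenius norm of a real matrix. -/
noncomputable def frobNorm {m n : ℕ} (A : Matrix (Fin m) (Fin n) ℝ) : ℝ :=
  Real.sqrt (∑ i, ∑ j, (A i j) ^ 2)

/-- Mirsky: `√(Σ_j (σ_j(A) - σ_j(B))²) ≤ ‖A - B‖_F`. -/
theorem stmt7 (m n : ℕ) (A B : Matrix (Fin m) (Fin n) ℝ) :
    Real.sqrt (∑ j, (svalDesc A j - svalDesc B j) ^ 2) ≤ frobNorm (A - B) := by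
  classical
  obtain ⟨vA, uA, hvA1, hvA2, huA1, huA2, huA3, hrepA⟩ := svd_data A
  obtain ⟨vB, uB, hvB1, hvB2, huB1, huB2, huB3, hrepB⟩ := svd_data B
  have core := mirsky_core A B
    (fun i => Real.sqrt ((Matrix.isHermitian_conjTranspose_mul_self A).eigenvalues i))
    (fun i => Real.sqrt ((Matrix.isHermitian_conjTranspose_mul_self B).eigenvalues i))
    (svalDesc A) (svalDesc B) uA uB vA vB
    (fun j => Real.sqrt_nonneg _) (fun j => Real.sqrt_nonneg _)
    (fun j => rfl) (fun j => rfl)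
    hvA1 hvB1 huA1 huB1 huA2 huB2 huA3 huB3 hrepA hrepB
  rw [frobNorm]
  refine Real.sqrt_le_sqrt ?_
  calc ∑ j, (svalDesc A j - svalDesc B j) ^ 2
      ≤ ∑ i, ∑ k, (A i k - B i k) ^ 2 := core
    _ = ∑ i, ∑ j, ((A - B) i j) ^ 2 := by simp [Matrix.sub_apply]
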